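/- arXiv:2206.06971 — 3 statements merged into one kernel-verified Lean document; each statement's English description precedes it below -/
import Mathlib

section
/- Let B and D be symmetric positive semidefinite N×N matrices with B positive definite, and let A = B + ε⁻¹ D for ε > 0. If c is a nonzero vector with Dc = 0, then κ(c) = ‖A⁻¹‖·‖Ac‖/‖c‖ ≤ λ_max(B)/λ_min(B), independent of ε. -/
open scoped InnerProductSpace

set_option synthInstance.maxHeartbeats 1000000 in
/-- If `A = B + ε⁻¹ D` and `D c = 0`, the effective condition number at `c` is bounded
by `λ_max(B)/λ_min(B)` (here `λ_max(B) = ‖B‖`), independently of `ε`. -/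
theorem effective_cond_ker_penalty (n : ℕ)
    (B D : EuclideanSpace ℝ (Fin n) →L[ℝ] EuclideanSpace ℝ (Fin n))
    (hBsym : ∀ x y, ⟪B x, y⟫_ℝ = ⟪x, B y⟫_ℝ)
    (hDsym : ∀ x y, ⟪D x, y⟫_ℝ = ⟪x, D y⟫_ℝ)
    (α : ℝ) (hα : 0 < α)
    (hBcoer : ∀ x, α * ‖x‖ ^ 2 ≤ ⟪B x, x⟫_ℝ)
    (hDpsd : ∀ x, 0 ≤ ⟪D x, x⟫_ℝ)
    (ε : ℝ) (hε : 0 < ε)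
    (A : EuclideanSpace ℝ (Fin n) ≃L[ℝ] EuclideanSpace ℝ (Fin n))
    (hA : (A : EuclideanSpace ℝ (Fin n) →L[ℝ] EuclideanSpace ℝ (Fin n)) = B + ε⁻¹ • D)
    (c : EuclideanSpace ℝ (Fin n)) (hc : c ≠ 0) (hDc : D c = 0) :
    ‖(A.symm : EuclideanSpace ℝ (Fin n) →L[ℝ] EuclideanSpace ℝ (Fin n))‖ * ‖A c‖ / ‖c‖ ≤
      ‖B‖ / α := by
  have hcoerA : ∀ x : EuclideanSpace ℝ (Fin n), α * ‖x‖ ^ 2 ≤ ⟪A x, x⟫_ℝ := by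
    intro x
    have : A x = B x + ε⁻¹ • D x := by
      have := congrFun (congrArg DFunLike.coe hA) x
      simpa using this
    rw [this, inner_add_left, inner_smul_left]
    have h1 := hBcoer x
    have h2 := hDpsd x
    have h3 : (0:ℝ) ≤ ε⁻¹ * ⟪D x, x⟫_ℝ := by positivity
    simp only [RCLike.star_def, starRingEnd_apply, star_trivial] at *
    linarith
  have hAlow : ∀ x : EuclideanSpace ℝ (Fin n), α * ‖x‖ ≤ ‖A x‖ := by
    intro x
    rcases eq_or_ne x 0 with rfl | hx
    · simp
    · have h1 : α * ‖x‖ ^ 2 ≤ ‖A x‖ * ‖x‖ := by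
        calc α * ‖x‖ ^ 2 ≤ ⟪A x, x⟫_ℝ := hcoerA x
        _ ≤ ‖A x‖ * ‖x‖ := real_inner_le_norm _ _
      have hx' : (0:ℝ) < ‖x‖ := norm_pos_iff.mpr hx
      have := (mul_le_mul_iff_of_pos_right hx').mp (by nlinarith)
      nlinarith
  have hAsymm : ‖(A.symm : EuclideanSpace ℝ (Fin n) →L[ℝ] EuclideanSpace ℝ (Fin n))‖ ≤ α⁻¹ := by
    apply ContinuousLinearMap.opNorm_le_bound _ (by positivity)
    intro y
    have := hAlow (A.symm y)
    have hAy : A (A.symm y) = y := A.apply_symm_apply y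
    rw [hAy] at this
    simp only [ContinuousLinearEquiv.coe_coe]
    rw [inv_mul_eq_div, le_div_iff₀ hα]
    linarith
  have hAc : ‖A c‖ ≤ ‖B‖ * ‖c‖ := by
    have : A c = B c := by
      have := congrFun (congrArg DFunLike.coe hA) c
      simp [hDc] at this
      simpa using this
    rw [this]
    exact B.le_opNorm c
  have hc' : (0:ℝ) < ‖c‖ := norm_pos_iff.mpr hc
  rw [div_le_div_iff₀ hc' hα]
  have h0 : (0:ℝ) ≤ ‖A c‖ := norm_nonneg _
  have hB0 : (0:ℝ) ≤ ‖B‖ := norm_nonneg _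
  have hs0 : (0:ℝ) ≤ ‖(A.symm : EuclideanSpace ℝ (Fin n) →L[ℝ] EuclideanSpace ℝ (Fin n))‖ :=
    norm_nonneg _
  calc ‖(A.symm : EuclideanSpace ℝ (Fin n) →L[ℝ] EuclideanSpace ℝ (Fin n))‖ * ‖A c‖ * α
      ≤ α⁻¹ * (‖B‖ * ‖c‖) * α := by
        apply mul_le_mul_of_nonneg_right _ hα.le
        exact mul_le_mul hAsymm hAc h0 (inv_nonneg.mpr hα.le)
    _ = ‖B‖ * ‖c‖ := by field_simp
end

section
/- Let A_ε = B + ε⁻¹D with B symmetric positive definite, D symmetric positive semidefinite, and let u_ε = A_ε⁻¹f. As ε → 0⁺, u_ε converges to u₀, the solution of the constrained problem: u₀ ∈ ker D and ⟨Bu₀, v⟩ = ⟨f, v⟩ for all v ∈ ker D. -/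
open scoped InnerProductSpace
open Filter

/-- A psd symmetric operator vanishes where its quadratic form vanishes. -/
lemma aux_psd_eq_zero {E : Type*} [NormedAddCommGroup E] [InnerProductSpace ℝ E]
    (D : E →L[ℝ] E) (hDsym : ∀ x y, ⟪D x, y⟫_ℝ = ⟪x, D y⟫_ℝ)
    (hDpsd : ∀ x, 0 ≤ ⟪D x, x⟫_ℝ) (x : E) (hx : ⟪D x, x⟫_ℝ = 0) : D x = 0 := by
  have key : ∀ v : E, ⟪D x, v⟫_ℝ = 0 := by
    intro v
    set a := ⟪D x, v⟫_ℝ with ha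
    set b := ⟪D v, v⟫_ℝ with hb
    have hbnn : 0 ≤ b := hDpsd v
    set t : ℝ := -a / (b + 1) with ht
    have h := hDpsd (x + t • v)
    have hexp : ⟪D (x + t • v), x + t • v⟫_ℝ = 2 * t * a + t ^ 2 * b := by
      have hsymm : ⟪D v, x⟫_ℝ = a := by rw [hDsym, real_inner_comm]
      simp only [map_add, map_smul, inner_add_left, inner_add_right,
        real_inner_smul_left, real_inner_smul_right, hx]
      rw [hsymm]
      ring
    rw [hexp] at h
    have hb1 : (0:ℝ) < b + 1 := by linarith
    have : 2 * (-a / (b + 1)) * a + (-a / (b + 1)) ^ 2 * b =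
        -(a ^ 2) * (b + 2) / (b + 1) ^ 2 := by field_simp; ring
    rw [ht, this] at h
    have h2 : 0 ≤ -(a ^ 2) * (b + 2) := by
      have := mul_le_mul_of_nonneg_right h (le_of_lt (pow_pos hb1 2))
      simpa [div_mul_cancel₀, ne_of_gt (pow_pos hb1 2)] using this
    nlinarith [sq_nonneg a]
  have := key (D x)
  simpa [real_inner_self_eq_norm_sq, pow_eq_zero_iff] using
    (inner_self_eq_zero (𝕜 := ℝ)).mp (by rw [← this])

/-- Coercivity of a positive quadratic form on a subspace, in finite dimension. -/
lemma aux_coercive (n : ℕ)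
    (S : EuclideanSpace ℝ (Fin n) →L[ℝ] EuclideanSpace ℝ (Fin n))
    (K : Submodule ℝ (EuclideanSpace ℝ (Fin n)))
    (h : ∀ x ∈ K, x ≠ 0 → 0 < ⟪S x, x⟫_ℝ) :
    ∃ c, 0 < c ∧ ∀ x ∈ K, c * ‖x‖ ^ 2 ≤ ⟪S x, x⟫_ℝ := by
  by_cases hK : ∃ x ∈ K, x ≠ 0
  · obtain ⟨z, hzK, hz0⟩ := hK
    set s : Set (EuclideanSpace ℝ (Fin n)) := (K : Set _) ∩ Metric.sphere 0 1 with hs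
    have hscomp : IsCompact s :=
      (isCompact_sphere (0 : EuclideanSpace ℝ (Fin n)) 1).inter_left K.closed_of_finiteDimensional
    have hzmem : ‖z‖⁻¹ • z ∈ s := by
      constructor
      · exact K.smul_mem _ hzK
      · simp [norm_smul, norm_ne_zero_iff.mpr hz0, inv_mul_cancel₀ (norm_ne_zero_iff.mpr hz0)]
    have hcont : ContinuousOn (fun x => ⟪S x, x⟫_ℝ) s :=
      (S.continuous.inner continuous_id).continuousOn
    obtain ⟨x₀, hx₀s, hmin⟩ := hscomp.exists_isMinOn ⟨_, hzmem⟩ hcont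
    have hx₀K : x₀ ∈ K := hx₀s.1
    have hx₀n : ‖x₀‖ = 1 := by simpa using hx₀s.2
    have hx₀0 : x₀ ≠ 0 := by intro h0; rw [h0] at hx₀n; simp at hx₀n
    refine ⟨⟪S x₀, x₀⟫_ℝ, h x₀ hx₀K hx₀0, ?_⟩
    intro x hxK
    rcases eq_or_ne x 0 with rfl | hx0
    · simp
    · have hxn : (0:ℝ) < ‖x‖ := norm_pos_iff.mpr hx0
      have hymem : ‖x‖⁻¹ • x ∈ s := by
        constructor
        · exact K.smul_mem _ hxK
        · simp [norm_smul, inv_mul_cancel₀ (ne_of_gt hxn)]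
      have hle : ⟪S x₀, x₀⟫_ℝ ≤ ⟪S (‖x‖⁻¹ • x), ‖x‖⁻¹ • x⟫_ℝ := hmin hymem
      have hval : ⟪S (‖x‖⁻¹ • x), ‖x‖⁻¹ • x⟫_ℝ = ‖x‖⁻¹ * ‖x‖⁻¹ * ⟪S x, x⟫_ℝ := by
        rw [map_smul, real_inner_smul_left, real_inner_smul_right]; ring
      rw [hval] at hle
      have := mul_le_mul_of_nonneg_right hle (sq_nonneg ‖x‖)
      calc ⟪S x₀, x₀⟫_ℝ * ‖x‖ ^ 2 ≤ ‖x‖⁻¹ * ‖x‖⁻¹ * ⟪S x, x⟫_ℝ * ‖x‖ ^ 2 := this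
        _ = ⟪S x, x⟫_ℝ := by
            rw [pow_two, show ‖x‖⁻¹ * ‖x‖⁻¹ * ⟪S x, x⟫_ℝ * (‖x‖ * ‖x‖)
                = (‖x‖⁻¹ * ‖x‖) * ((‖x‖⁻¹ * ‖x‖) * ⟪S x, x⟫_ℝ) from by ring,
              inv_mul_cancel₀ (ne_of_gt hxn)]
            ring
  · push_neg at hK
    refine ⟨1, one_pos, fun x hxK => ?_⟩
    have : x = 0 := hK x hxK
    simp [this]
set_option maxHeartbeats 1000000 in
/-- As `ε → 0⁺`, the penalized solution `u_ε` of `(B + ε⁻¹D)u_ε = f` converges to the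
solution `u₀` of the constrained problem on `ker D`. -/
theorem penalized_solution_tendsto_constrained (n : ℕ)
    (B D : EuclideanSpace ℝ (Fin n) →L[ℝ] EuclideanSpace ℝ (Fin n))
    (hBsym : ∀ x y, ⟪B x, y⟫_ℝ = ⟪x, B y⟫_ℝ)
    (hDsym : ∀ x y, ⟪D x, y⟫_ℝ = ⟪x, D y⟫_ℝ)
    (hBpd : ∀ x, x ≠ 0 → 0 < ⟪B x, x⟫_ℝ)
    (hDpsd : ∀ x, 0 ≤ ⟪D x, x⟫_ℝ)
    (f : EuclideanSpace ℝ (Fin n))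
    (u : ℝ → EuclideanSpace ℝ (Fin n))
    (hu : ∀ ε : ℝ, 0 < ε → (B + ε⁻¹ • D) (u ε) = f)
    (u₀ : EuclideanSpace ℝ (Fin n)) (hu₀ : D u₀ = 0)
    (hGalerkin : ∀ v, D v = 0 → ⟪B u₀, v⟫_ℝ = ⟪f, v⟫_ℝ) :
    Tendsto u (nhdsWithin 0 (Set.Ioi 0)) (nhds u₀) := by
  classical
  set K : Submodule ℝ (EuclideanSpace ℝ (Fin n)) := LinearMap.ker (D : EuclideanSpace ℝ (Fin n) →ₗ[ℝ] EuclideanSpace ℝ (Fin n)) with hK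
  have hmemK : ∀ x, x ∈ K ↔ D x = 0 := fun x => LinearMap.mem_ker
  obtain ⟨α, hα, hBcoer⟩ := aux_coercive n B ⊤ (fun x _ hx => hBpd x hx)
  have hBcoer' : ∀ x, α * ‖x‖ ^ 2 ≤ ⟪B x, x⟫_ℝ := fun x => hBcoer x trivial
  obtain ⟨β, hβ, hDcoer⟩ := aux_coercive n D Kᗮ (by
    intro x hxK hx0
    rcases lt_or_eq_of_le (hDpsd x) with h | h
    · exact h
    · exfalso
      have hDx : D x = 0 := aux_psd_eq_zero D hDsym hDpsd x h.symm
      have hxKmem : x ∈ K := (hmemK x).mpr hDx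
      have := (Submodule.mem_orthogonal K x).mp hxK x hxKmem
      exact hx0 ((inner_self_eq_zero (𝕜 := ℝ)).mp this))
  set C : ℝ := ‖f - B u₀‖ with hC
  have hCnn : 0 ≤ C := norm_nonneg _
  have hBnn : (0:ℝ) ≤ ‖B‖ := norm_nonneg _
  -- key quantitative estimate
  have key : ∀ ε : ℝ, 0 < ε → α ^ 3 * β * ‖u ε - u₀‖ ^ 2 ≤ ‖B‖ ^ 2 * C ^ 2 * ε := by
    intro ε hε
    set e : EuclideanSpace ℝ (Fin n) := u ε - u₀ with he
    set p : EuclideanSpace ℝ (Fin n) := (K.orthogonalProjectionOnto e : EuclideanSpace ℝ (Fin n))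
      with hp
    set q : EuclideanSpace ℝ (Fin n) := e - p with hq
    have hpK : p ∈ K := SetLike.coe_mem _
    have hqK : q ∈ Kᗮ := K.sub_starProjection_mem_orthogonal e
    have hDp : D p = 0 := (hmemK p).mp hpK
    have heq : ∀ w, ⟪B (u ε), w⟫_ℝ + ε⁻¹ * ⟪D (u ε), w⟫_ℝ = ⟪f, w⟫_ℝ := by
      intro w
      have h1 := hu ε hε
      have h2 : B (u ε) + ε⁻¹ • D (u ε) = f := by
        simpa [ContinuousLinearMap.add_apply, ContinuousLinearMap.smul_apply] using h1
      calc ⟪B (u ε), w⟫_ℝ + ε⁻¹ * ⟪D (u ε), w⟫_ℝ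
          = ⟪B (u ε) + ε⁻¹ • D (u ε), w⟫_ℝ := by
            rw [inner_add_left, real_inner_smul_left]
        _ = ⟪f, w⟫_ℝ := by rw [h2]
    have hDe : D e = D (u ε) := by rw [he, map_sub, hu₀, sub_zero]
    have hBev : ∀ v ∈ K, ⟪B e, v⟫_ℝ = 0 := by
      intro v hv
      have hDv : D v = 0 := (hmemK v).mp hv
      have h1 := heq v
      have h2 : ⟪D (u ε), v⟫_ℝ = 0 := by rw [hDsym, hDv, inner_zero_right]
      rw [h2, mul_zero, add_zero] at h1
      rw [he, map_sub, inner_sub_left, h1, hGalerkin v hDv, sub_self]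
    have henergy : ⟪B e, e⟫_ℝ + ε⁻¹ * ⟪D e, e⟫_ℝ = ⟪f - B u₀, e⟫_ℝ := by
      have h1 := heq e
      have h2 : ⟪B (u ε), e⟫_ℝ = ⟪B e, e⟫_ℝ + ⟪B u₀, e⟫_ℝ := by
        rw [he, map_sub, inner_sub_left]; ring
      rw [h2, ← hDe] at h1
      rw [inner_sub_left]
      linarith
    have hBee : 0 ≤ ⟪B e, e⟫_ℝ := le_trans (by positivity) (hBcoer' e)
    have hDee : 0 ≤ ⟪D e, e⟫_ℝ := hDpsd e
    have hfBe : ⟪f - B u₀, e⟫_ℝ ≤ C * ‖e‖ := by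
      calc ⟪f - B u₀, e⟫_ℝ ≤ ‖f - B u₀‖ * ‖e‖ := real_inner_le_norm _ _
        _ = C * ‖e‖ := by rw [hC]
    have hεinv : 0 < ε⁻¹ := inv_pos.mpr hε
    have hBle : ⟪B e, e⟫_ℝ ≤ C * ‖e‖ := by
      nlinarith [mul_nonneg hεinv.le hDee]
    -- bound ‖e‖
    have hEbound : α * ‖e‖ ≤ C := by
      rcases eq_or_lt_of_le (norm_nonneg e) with h0 | h0
      · rw [← h0, mul_zero]; exact hCnn
      · have h1 : α * ‖e‖ ^ 2 ≤ C * ‖e‖ := le_trans (hBcoer' e) hBle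
        have : (α * ‖e‖) * ‖e‖ ≤ C * ‖e‖ := by nlinarith
        exact le_of_mul_le_mul_right this h0
    -- bound on D e
    have hDbound : ⟪D e, e⟫_ℝ ≤ ε * (C * ‖e‖) := by
      have h1 : ε⁻¹ * ⟪D e, e⟫_ℝ ≤ C * ‖e‖ := by linarith
      have h2 := mul_le_mul_of_nonneg_left h1 hε.le
      rwa [← mul_assoc, mul_inv_cancel₀ (ne_of_gt hε), one_mul] at h2
    -- D on q
    have hDq : D q = D e := by rw [hq, map_sub, hDp, sub_zero]
    have hDqq : ⟪D q, q⟫_ℝ = ⟪D e, e⟫_ℝ := by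
      rw [hDq, hq, inner_sub_right, hDsym e p, hDp, inner_zero_right, sub_zero]
    have hqbound : β * ‖q‖ ^ 2 ≤ ε * (C * ‖e‖) := by
      calc β * ‖q‖ ^ 2 ≤ ⟪D q, q⟫_ℝ := hDcoer q hqK
        _ = ⟪D e, e⟫_ℝ := hDqq
        _ ≤ ε * (C * ‖e‖) := hDbound
    -- ⟪B e, e⟫ = ⟪B e, q⟫
    have hBeq : ⟪B e, e⟫_ℝ = ⟪B e, q⟫_ℝ := by
      have h1 : ⟪B e, q⟫_ℝ = ⟪B e, e⟫_ℝ - ⟪B e, p⟫_ℝ := by rw [hq, inner_sub_right]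
      rw [h1, hBev p hpK, sub_zero]
    have hBound2 : α * ‖e‖ ^ 2 ≤ ‖B‖ * ‖e‖ * ‖q‖ := by
      calc α * ‖e‖ ^ 2 ≤ ⟪B e, e⟫_ℝ := hBcoer' e
        _ = ⟪B e, q⟫_ℝ := hBeq
        _ ≤ ‖B e‖ * ‖q‖ := real_inner_le_norm _ _
        _ ≤ ‖B‖ * ‖e‖ * ‖q‖ :=
            mul_le_mul_of_nonneg_right (B.le_opNorm e) (norm_nonneg q)
    have hBound3 : α * ‖e‖ ≤ ‖B‖ * ‖q‖ := by
      rcases eq_or_lt_of_le (norm_nonneg e) with h0 | h0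
      · rw [← h0, mul_zero]; positivity
      · have : (α * ‖e‖) * ‖e‖ ≤ (‖B‖ * ‖q‖) * ‖e‖ := by nlinarith
        exact le_of_mul_le_mul_right this h0
    have s1 : α ^ 2 * ‖e‖ ^ 2 ≤ ‖B‖ ^ 2 * ‖q‖ ^ 2 := by
      have := mul_self_le_mul_self (mul_nonneg hα.le (norm_nonneg e)) hBound3
      nlinarith
    have s2 : α * (β * ‖q‖ ^ 2) ≤ ε * C ^ 2 := by
      have h1 := mul_le_mul_of_nonneg_left hqbound hα.le
      have h2 := mul_le_mul_of_nonneg_left hEbound (mul_nonneg hε.le hCnn)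
      nlinarith
    nlinarith [mul_le_mul_of_nonneg_left s1 (mul_nonneg hα.le hβ.le),
      mul_le_mul_of_nonneg_left s2 (sq_nonneg ‖B‖)]
  -- conclude convergence
  have hpos : 0 < α ^ 3 * β := by positivity
  set c₀ : ℝ := ‖B‖ ^ 2 * C ^ 2 / (α ^ 3 * β) with hc₀
  rw [tendsto_iff_norm_sub_tendsto_zero]
  apply squeeze_zero' (g := fun ε => Real.sqrt (c₀ * ε))
  · exact Filter.Eventually.of_forall fun ε => norm_nonneg _
  · refine Filter.eventually_of_mem self_mem_nhdsWithin fun ε hε => ?_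
    have hε' : (0:ℝ) < ε := hε
    have h2 : ‖u ε - u₀‖ ^ 2 ≤ c₀ * ε := by
      rw [hc₀, div_mul_eq_mul_div, le_div_iff₀ hpos]
      nlinarith [key ε hε']
    calc ‖u ε - u₀‖ = Real.sqrt (‖u ε - u₀‖ ^ 2) := (Real.sqrt_sq (norm_nonneg _)).symm
      _ ≤ Real.sqrt (c₀ * ε) := Real.sqrt_le_sqrt h2
  · have h1 : Tendsto (fun ε : ℝ => c₀ * ε) (nhdsWithin 0 (Set.Ioi 0)) (nhds 0) := by
      have hcont : Continuous (fun ε : ℝ => c₀ * ε) := continuous_const.mul continuous_id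
      have := hcont.tendsto 0
      simpa using this.mono_left nhdsWithin_le_nhds
    have h2 := (Real.continuous_sqrt.tendsto 0).comp h1
    simpa [Function.comp_def] using h2
end

section
/- Let A = B + ε⁻¹D with B symmetric positive definite (λ_min(B) ≥ α), D symmetric positive semidefinite, and suppose ‖Bc‖ ≤ C₁h⁻²‖c‖ and ‖Dc‖ ≤ C₂h⁻¹·δ(c) where δ(c) ≤ TOL·‖c‖ (an adaptively enforced tolerance). Then for c ≠ 0 with Ac = f, κ(c) ≤ α⁻¹h⁻²(C₁ + C₂·h·TOL/ε). -/
open scoped InnerProductSpace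

/-- Effective condition number under an adaptively enforced tolerance on the penalty
seminorm: `κ(c) ≤ α⁻¹h⁻²(C₁ + C₂·h·TOL/ε)`. -/
theorem effective_cond_adaptive_tol (n : ℕ)
    (B D : EuclideanSpace ℝ (Fin n) →L[ℝ] EuclideanSpace ℝ (Fin n))
    (hBsym : ∀ x y, ⟪B x, y⟫_ℝ = ⟪x, B y⟫_ℝ)
    (hDsym : ∀ x y, ⟪D x, y⟫_ℝ = ⟪x, D y⟫_ℝ)
    (α h ε C₁ C₂ TOL : ℝ)
    (hα : 0 < α) (hh : 0 < h) (hε : 0 < ε) (hC₁ : 0 < C₁) (hC₂ : 0 < C₂) (hTOL : 0 < TOL)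
    (hBcoer : ∀ x, α * ‖x‖ ^ 2 ≤ ⟪B x, x⟫_ℝ)
    (hDpsd : ∀ x, 0 ≤ ⟪D x, x⟫_ℝ)
    (A : EuclideanSpace ℝ (Fin n) ≃L[ℝ] EuclideanSpace ℝ (Fin n))
    (hA : (A : EuclideanSpace ℝ (Fin n) →L[ℝ] EuclideanSpace ℝ (Fin n)) = B + ε⁻¹ • D)
    (δ : EuclideanSpace ℝ (Fin n) → ℝ) (hδ : ∀ v, 0 ≤ δ v)
    (c f : EuclideanSpace ℝ (Fin n)) (hc : c ≠ 0) (hf : A c = f)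
    (hBc : ‖B c‖ ≤ C₁ * h⁻¹ ^ 2 * ‖c‖)
    (hDc : ‖D c‖ ≤ C₂ * h⁻¹ * δ c)
    (hδc : δ c ≤ TOL * ‖c‖) :
    ‖(A.symm : EuclideanSpace ℝ (Fin n) →L[ℝ] EuclideanSpace ℝ (Fin n))‖ * ‖A c‖ / ‖c‖ ≤
      α⁻¹ * h⁻¹ ^ 2 * (C₁ + C₂ * h * TOL / ε) := by

  have hc' : (0:ℝ) < ‖c‖ := norm_pos_iff.mpr hc
  -- coercivity of A
  have hAcoer : ∀ x : EuclideanSpace ℝ (Fin n), α * ‖x‖ ≤ ‖A x‖ := by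
    intro x
    rcases eq_or_ne x 0 with rfl | hx
    · simp
    have hx' : (0:ℝ) < ‖x‖ := norm_pos_iff.mpr hx
    have h1 : α * ‖x‖ ^ 2 ≤ ⟪(A : EuclideanSpace ℝ (Fin n) →L[ℝ] EuclideanSpace ℝ (Fin n)) x, x⟫_ℝ := by
      rw [hA]
      have := hBcoer x
      have hD := hDpsd x
      simp only [ContinuousLinearMap.add_apply, ContinuousLinearMap.smul_apply,
        inner_add_left, inner_smul_left, starRingEnd_apply, star_trivial]
      have : 0 ≤ ε⁻¹ * ⟪D x, x⟫_ℝ := mul_nonneg (inv_nonneg.mpr hε.le) hD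
      nlinarith [hBcoer x]
    have h2 : ⟪(A : EuclideanSpace ℝ (Fin n) →L[ℝ] EuclideanSpace ℝ (Fin n)) x, x⟫_ℝ ≤ ‖A x‖ * ‖x‖ := by
      calc ⟪(A : EuclideanSpace ℝ (Fin n) →L[ℝ] EuclideanSpace ℝ (Fin n)) x, x⟫_ℝ
          ≤ ‖(A : EuclideanSpace ℝ (Fin n) →L[ℝ] EuclideanSpace ℝ (Fin n)) x‖ * ‖x‖ :=
            real_inner_le_norm _ _
        _ = ‖A x‖ * ‖x‖ := rfl
    have h3 : α * ‖x‖ * ‖x‖ ≤ ‖A x‖ * ‖x‖ := by nlinarith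
    exact le_of_mul_le_mul_right h3 hx'
  have hsymm : ‖(A.symm : EuclideanSpace ℝ (Fin n) →L[ℝ] EuclideanSpace ℝ (Fin n))‖ ≤ α⁻¹ := by
    apply ContinuousLinearMap.opNorm_le_bound _ (inv_nonneg.mpr hα.le)
    intro y
    have := hAcoer (A.symm y)
    rw [show A (A.symm y) = y from A.apply_symm_apply y] at this
    rw [inv_mul_eq_div, le_div_iff₀ hα, mul_comm]
    simpa using this
  have hAc : ‖A c‖ ≤ (C₁ * h⁻¹ ^ 2 + ε⁻¹ * (C₂ * h⁻¹ * TOL)) * ‖c‖ := by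
    have h1 : ‖A c‖ ≤ ‖B c‖ + ε⁻¹ * ‖D c‖ := by
      have : A c = B c + ε⁻¹ • D c := by
        have := congrArg (fun T : EuclideanSpace ℝ (Fin n) →L[ℝ] EuclideanSpace ℝ (Fin n) => T c) hA
        simpa using this
      rw [this]
      calc ‖B c + ε⁻¹ • D c‖ ≤ ‖B c‖ + ‖ε⁻¹ • D c‖ := norm_add_le _ _
        _ = ‖B c‖ + |ε⁻¹| * ‖D c‖ := by rw [norm_smul]; rfl
        _ = ‖B c‖ + ε⁻¹ * ‖D c‖ := by rw [abs_of_nonneg (inv_nonneg.mpr hε.le)]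
    have h2 : ‖D c‖ ≤ C₂ * h⁻¹ * (TOL * ‖c‖) := by
      refine hDc.trans ?_
      have : C₂ * h⁻¹ > 0 := mul_pos hC₂ (inv_pos.mpr hh)
      nlinarith
    have h3 : ε⁻¹ * ‖D c‖ ≤ ε⁻¹ * (C₂ * h⁻¹ * (TOL * ‖c‖)) :=
      mul_le_mul_of_nonneg_left h2 (inv_nonneg.mpr hε.le)
    calc ‖A c‖ ≤ ‖B c‖ + ε⁻¹ * ‖D c‖ := h1
      _ ≤ C₁ * h⁻¹ ^ 2 * ‖c‖ + ε⁻¹ * (C₂ * h⁻¹ * (TOL * ‖c‖)) := add_le_add hBc h3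
      _ = (C₁ * h⁻¹ ^ 2 + ε⁻¹ * (C₂ * h⁻¹ * TOL)) * ‖c‖ := by ring
  have key : ‖(A.symm : EuclideanSpace ℝ (Fin n) →L[ℝ] EuclideanSpace ℝ (Fin n))‖ * ‖A c‖ / ‖c‖ ≤
      α⁻¹ * (C₁ * h⁻¹ ^ 2 + ε⁻¹ * (C₂ * h⁻¹ * TOL)) := by
    rw [div_le_iff₀ hc']
    calc ‖(A.symm : EuclideanSpace ℝ (Fin n) →L[ℝ] EuclideanSpace ℝ (Fin n))‖ * ‖A c‖
        ≤ α⁻¹ * ((C₁ * h⁻¹ ^ 2 + ε⁻¹ * (C₂ * h⁻¹ * TOL)) * ‖c‖) := by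
          apply mul_le_mul hsymm hAc (norm_nonneg _) (inv_nonneg.mpr hα.le)
      _ = α⁻¹ * (C₁ * h⁻¹ ^ 2 + ε⁻¹ * (C₂ * h⁻¹ * TOL)) * ‖c‖ := by ring
  refine key.trans (le_of_eq ?_)
  field_simp
end
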